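/- Let v_1, ..., v_{2^{n-1}} be nonzero vectors in F_2^n with v_{2i-1} = v_{2i} for all 1 ≤ i ≤ 2^{n-2}, and suppose there are at most l < n distinct values among the v_i. Then, assuming the pairing conjecture holds in F_2^2 through F_2^5, there exists a partition of F_2^n into pairs (p_i, q_i) with p_i + q_i = v_i for all 1 ≤ i ≤ 2^{n-1}. -/

import Mathlib

/-- A partition of `F_2^n` into `2^{n-1}` pairs `(p i, q i)`: the `2^n` vectors
`p i, q i` are pairwise distinct and cover all of `F_2^n`. -/
def PairPartition (n : ℕ) (p q : Fin (2 ^ (n - 1)) → (Fin n → ZMod 2)) : Prop :=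
  Function.Bijective (fun x : Fin (2 ^ (n - 1)) × Bool => if x.2 then p x.1 else q x.1)

/-- The pairing conjecture in `F_2^m`: any `2^{m-1}` nonzero vectors summing to zero are
the pair-sums of a partition of `F_2^m` into pairs. -/
def PairingConj (m : ℕ) : Prop :=
  ∀ v : Fin (2 ^ (m - 1)) → (Fin m → ZMod 2), (∀ i, v i ≠ 0) → ∑ i, v i = 0 →
    ∃ p q : Fin (2 ^ (m - 1)) → (Fin m → ZMod 2),
      PairPartition m p q ∧ ∀ i, p i + q i = v i


namespace PairingAuxZZ

open Finset Multiset

lemma zmod2_add_self : ∀ a : ZMod 2, a + a = 0 := by decide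

lemma vadd_self {k : ℕ} (x : Fin k → ZMod 2) : x + x = 0 :=
  funext fun i => zmod2_add_self (x i)

theorem exists_perm_comp {α : Type*} :
    ∀ (m : ℕ) (f g : Fin m → α), (Finset.univ.val.map f) = (Finset.univ.val.map g) →
      ∃ σ : Equiv.Perm (Fin m), ∀ i, f (σ i) = g i := by
  intro m
  induction m with
  | zero => exact fun f g _ => ⟨Equiv.refl _, fun i => i.elim0⟩
  | succ m ih =>
    intro f g h
    have hg0 : g 0 ∈ Multiset.map f Finset.univ.val := by
      rw [h]; exact Multiset.mem_map_of_mem _ (Finset.mem_univ_val _)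
    obtain ⟨j, -, hj⟩ := Multiset.mem_map.mp hg0
    set f' : Fin (m+1) → α := f ∘ (Equiv.swap 0 j) with hf'
    have hswap : Finset.univ.val.map (⇑(Equiv.swap 0 j)) = Finset.univ.val := by
      have h1 := Finset.map_univ_equiv (Equiv.swap 0 j)
      have := congrArg Finset.val h1
      rwa [Finset.map_val] at this
    have hmap' : Finset.univ.val.map f' = Finset.univ.val.map f := by
      rw [hf']
      rw [show Multiset.map (f ∘ ⇑(Equiv.swap 0 j)) Finset.univ.val
          = Multiset.map f (Multiset.map (⇑(Equiv.swap 0 j)) Finset.univ.val) from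
        (Multiset.map_map _ _ _).symm, hswap]
    have huniv : (Finset.univ : Finset (Fin (m+1))).val
        = 0 ::ₘ (Finset.univ.val.map Fin.succ) := by
      rw [Fin.univ_succ, Finset.cons_val, Finset.map_val]
      rfl
    have hkey : f' 0 ::ₘ Finset.univ.val.map (f' ∘ Fin.succ)
        = g 0 ::ₘ Finset.univ.val.map (g ∘ Fin.succ) := by
      have h2 : Finset.univ.val.map f' = Finset.univ.val.map g := hmap'.trans h
      rw [huniv] at h2
      simpa [Multiset.map_map, Function.comp_def] using h2
    have hf'0 : f' 0 = g 0 := by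
      simp [hf', hj]
    rw [hf'0, Multiset.cons_inj_right] at hkey
    obtain ⟨σ', hσ'⟩ := ih (f' ∘ Fin.succ) (g ∘ Fin.succ) hkey
    refine ⟨(Equiv.Perm.decomposeFin.symm (0, σ')).trans (Equiv.swap 0 j), fun i => ?_⟩
    refine Fin.cases ?_ (fun k => ?_) i
    · simp [Equiv.Perm.decomposeFin_symm_apply_zero, hj]
    · have h3 : (Equiv.Perm.decomposeFin.symm (0, σ')) k.succ = (σ' k).succ := by
        rw [Equiv.Perm.decomposeFin_symm_apply_succ]
        simp
      simp only [Equiv.trans_apply, h3]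
      exact hσ' k

def RealM (n : ℕ) (M : Multiset (Fin n → ZMod 2)) : Prop :=
  ∃ p q : Fin (2 ^ (n - 1)) → (Fin n → ZMod 2),
    PairPartition n p q ∧ Multiset.map (fun i => p i + q i) Finset.univ.val = M

lemma exists_tuple {α : Type*} (M : Multiset α) (m : ℕ) (h : Multiset.card M = m) :
    ∃ v : Fin m → α, Multiset.map v Finset.univ.val = M := by
  induction M using Quotient.inductionOn with
  | h l =>
    subst h
    refine ⟨fun i => l.get (Fin.cast (by simp) i), ?_⟩
    rw [Fin.univ_val_map]
    show ((List.ofFn fun i => l.get (Fin.cast _ i) : List α) : Multiset α) = _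
    congr 1
    have : ∀ (k : ℕ) (hk : k = l.length), List.ofFn (fun i => l.get (Fin.cast hk i)) = l := by
      intro k hk; subst hk; simp [List.ofFn_get]
    exact this _ _

lemma zmod2_cases : ∀ c : ZMod 2, c = 0 ∨ c = 1 := by decide

lemma pairPartition_comp {n : ℕ} {p q : Fin (2 ^ (n - 1)) → (Fin n → ZMod 2)}
    (σ : Equiv.Perm (Fin (2 ^ (n - 1)))) (h : PairPartition n p q) :
    PairPartition n (p ∘ σ) (q ∘ σ) := by
  have heq : (fun x : Fin (2 ^ (n-1)) × Bool => if x.2 then (p ∘ σ) x.1 else (q ∘ σ) x.1)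
      = (fun x : Fin (2 ^ (n-1)) × Bool => if x.2 then p x.1 else q x.1)
        ∘ (Equiv.prodCongr σ (Equiv.refl Bool)) := rfl
  rw [PairPartition, heq]
  exact h.comp (Equiv.bijective _)

theorem glue (m : ℕ) (ι : (Fin (m+1) → ZMod 2) →ₗ[ZMod 2] (Fin (m+2) → ZMod 2))
    (hinj : Function.Injective ι) (e : Fin (m+2) → ZMod 2) (he : e ∉ LinearMap.range ι)
    (M₁ M₂ : Multiset (Fin (m+1) → ZMod 2))
    (h1 : RealM (m+1) M₁) (h2 : RealM (m+1) M₂) :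
    RealM (m+2) (M₁.map ι + M₂.map ι) := by
  obtain ⟨p₁, q₁, hpp₁, hm₁⟩ := h1
  obtain ⟨p₂, q₂, hpp₂, hm₂⟩ := h2
  have hpow : 2 ^ m + 2 ^ m = 2 ^ (m+1) := by rw [pow_succ]; ring
  let κ : (Fin (2^m) ⊕ Fin (2^m)) ≃ Fin (2^(m+1)) := finSumFinEquiv.trans (finCongr hpow)
  let F₁ : Fin (2^m) × Bool → (Fin (m+1) → ZMod 2) := fun x => if x.2 then p₁ x.1 else q₁ x.1
  let F₂ : Fin (2^m) × Bool → (Fin (m+1) → ZMod 2) := fun x => if x.2 then p₂ x.1 else q₂ x.1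
  have hF₁ : Function.Bijective F₁ := hpp₁
  have hF₂ : Function.Bijective F₂ := hpp₂
  -- p, q on the big index set
  let p : Fin (2^(m+1)) → (Fin (m+2) → ZMod 2) :=
    (Sum.elim (fun j => ι (p₁ j)) (fun j => ι (p₂ j) + e)) ∘ κ.symm
  let q : Fin (2^(m+1)) → (Fin (m+2) → ZMod 2) :=
    (Sum.elim (fun j => ι (q₁ j)) (fun j => ι (q₂ j) + e)) ∘ κ.symm
  have he0 : e ≠ 0 := fun h => he (h ▸ Submodule.zero_mem _)
  have hcover : ∀ z : Fin (m+2) → ZMod 2,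
      z ∈ LinearMap.range ι ∨ z + e ∈ LinearMap.range ι := by
    have hr : Module.finrank (ZMod 2) (LinearMap.range ι) = m + 1 := by
      rw [LinearMap.finrank_range_of_inj hinj, Module.finrank_fin_fun]
    have hinf : LinearMap.range ι ⊓ Submodule.span (ZMod 2) {e} = ⊥ := by
      rw [Submodule.eq_bot_iff]
      rintro x hx
      rw [Submodule.mem_inf] at hx
      obtain ⟨hx1, hx2⟩ := hx
      rw [Submodule.mem_span_singleton] at hx2
      obtain ⟨c, rfl⟩ := hx2
      rcases zmod2_cases c with rfl | rfl
      · rw [zero_smul]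
      · rw [one_smul] at hx1 ⊢; exact absurd hx1 he
    have hsup : LinearMap.range ι ⊔ Submodule.span (ZMod 2) {e} = ⊤ := by
      apply Submodule.eq_top_of_finrank_eq
      have hh := Submodule.finrank_sup_add_finrank_inf_eq
        (LinearMap.range ι) (Submodule.span (ZMod 2) {e})
      rw [hinf, finrank_bot, finrank_span_singleton he0, hr] at hh
      rw [Module.finrank_fin_fun]
      omega
    intro z
    have hz : z ∈ LinearMap.range ι ⊔ Submodule.span (ZMod 2) {e} := by
      rw [hsup]; trivial
    rw [Submodule.mem_sup] at hz
    obtain ⟨y, hy, w, hw, rfl⟩ := hz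
    rw [Submodule.mem_span_singleton] at hw
    obtain ⟨c, rfl⟩ := hw
    rcases zmod2_cases c with rfl | rfl
    · left; rw [zero_smul, add_zero]; exact hy
    · right
      rw [one_smul, add_assoc, vadd_self, add_zero]; exact hy
  refine ⟨p, q, ?_, ?_⟩
  · -- PairPartition
    let G : (Fin (2^m) × Bool) ⊕ (Fin (2^m) × Bool) → (Fin (m+2) → ZMod 2) :=
      Sum.elim (fun x => ι (F₁ x)) (fun x => ι (F₂ x) + e)
    have hGbij : Function.Bijective G := by
      constructor
      · rintro (a | a) (b | b) hab <;> simp only [G, Sum.elim_inl, Sum.elim_inr] at hab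
        · rw [hF₁.1 (hinj hab)]
        · exfalso; apply he
          exact ⟨F₁ a - F₂ b, by rw [map_sub, hab]; abel⟩
        · exfalso; apply he
          exact ⟨F₁ b - F₂ a, by rw [map_sub, ← hab]; abel⟩
        · rw [hF₂.1 (hinj (add_right_cancel hab))]
      · intro z
        rcases hcover z with ⟨w, hw⟩ | ⟨w, hw⟩
        · obtain ⟨x, hx⟩ := hF₁.2 w
          exact ⟨Sum.inl x, by simp only [G, Sum.elim_inl]; rw [hx, hw]⟩
        · obtain ⟨x, hx⟩ := hF₂.2 w
          refine ⟨Sum.inr x, ?_⟩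
          simp only [G, Sum.elim_inr]
          rw [hx, hw, add_assoc, vadd_self, add_zero]
    show Function.Bijective (fun x : Fin (2^(m+1)) × Bool => if x.2 then p x.1 else q x.1)
    have hEq : (fun x : Fin (2^(m+1)) × Bool => if x.2 then p x.1 else q x.1)
        = G ∘ ((Equiv.prodCongr κ.symm (Equiv.refl Bool)).trans
            (Equiv.sumProdDistrib _ _ _)) := by
      funext x
      obtain ⟨i, b⟩ := x
      simp only [Function.comp_apply, Equiv.trans_apply, Equiv.prodCongr_apply,
        Equiv.coe_refl, Prod.map]
      rcases hs : κ.symm i with j | j <;> cases b <;>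
        simp [G, F₁, F₂, p, q, hs, Equiv.sumProdDistrib]
    rw [hEq]
    exact hGbij.comp (Equiv.bijective _)
  · -- multiset of differences
    show Multiset.map (fun i : Fin (2^(m+1)) => p i + q i) Finset.univ.val = _
    have hpq : (fun i : Fin (2^(m+1)) => p i + q i)
        = (Sum.elim (fun j => ι (p₁ j) + ι (q₁ j))
            (fun j => (ι (p₂ j) + e) + (ι (q₂ j) + e))) ∘ κ.symm := by
      funext i
      simp only [p, q, Function.comp_apply]
      rcases κ.symm i with j | j <;> rfl
    rw [hpq]
    have hre : Multiset.map ((Sum.elim (fun j => ι (p₁ j) + ι (q₁ j))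
            (fun j => (ι (p₂ j) + e) + (ι (q₂ j) + e))) ∘ ⇑κ.symm) Finset.univ.val
        = Multiset.map (Sum.elim (fun j => ι (p₁ j) + ι (q₁ j))
            (fun j => (ι (p₂ j) + e) + (ι (q₂ j) + e)))
            (Finset.univ.val : Multiset (Fin (2^m) ⊕ Fin (2^m))) := by
      have hswap : Finset.univ.val.map (⇑κ.symm) = Finset.univ.val := by
        have h1 := Finset.map_univ_equiv κ.symm
        have := congrArg Finset.val h1
        rwa [Finset.map_val] at this
      rw [← hswap, Multiset.map_map]
    rw [hre]
    have huval : (Finset.univ.val : Multiset (Fin (2^m) ⊕ Fin (2^m)))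
        = Finset.univ.val.map Sum.inl + Finset.univ.val.map Sum.inr := by
      have := congrArg Finset.val (Finset.univ_disjSum_univ (α := Fin (2^m)) (β := Fin (2^m)))
      rw [Finset.val_disjSum] at this
      exact this.symm
    rw [huval, Multiset.map_add, Multiset.map_map, Multiset.map_map]
    congr 1
    · rw [← hm₁, Multiset.map_map]
      apply Multiset.map_congr rfl
      intro i _
      simp [map_add]
    · rw [← hm₂, Multiset.map_map]
      apply Multiset.map_congr rfl
      intro i _
      show (ι (p₂ i) + e) + (ι (q₂ i) + e) = ι (p₂ i + q₂ i)
      have h6 : ι (p₂ i) + e + (ι (q₂ i) + e) = ι (p₂ i) + ι (q₂ i) + (e + e) := by abel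
      rw [h6, vadd_self e, add_zero, ← _root_.map_add]
lemma exists_le_card {α : Type*} (M : Multiset α) (k : ℕ) (hk : k ≤ Multiset.card M) :
    ∃ A, A ≤ M ∧ Multiset.card A = k := by
  induction M using Quotient.inductionOn with
  | h l =>
    refine ⟨(l.take k : List α), ?_, ?_⟩
    · exact (List.take_sublist k l).subperm
    · simpa using Nat.min_eq_left (by simpa using hk)

lemma card_filter_ne {α : Type*} [DecidableEq α] (M : Multiset α) (a : α) :
    Multiset.card (M.filter (· ≠ a)) = Multiset.card M - M.count a := by
  have h1 := Multiset.filter_add_not (· = a) M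
  have h2 : M.filter (· = a) = Multiset.replicate (M.count a) a := Multiset.filter_eq' M a
  have h3 : M.filter (fun x => ¬ x = a) = M.filter (· ≠ a) := rfl
  have := congrArg Multiset.card h1
  rw [Multiset.card_add, h2, h3, Multiset.card_replicate] at this
  omega

lemma split_lemma {α : Type*} [DecidableEq α] (n : ℕ) (hn : 6 ≤ n) (M₀ : Multiset α)
    (hcard : Multiset.card M₀ = 2 ^ (n-2)) (ht : M₀.toFinset.card ≤ n - 1) :
    ∃ A, A ≤ M₀ ∧ Multiset.card A = 2 ^ (n-3) ∧ A.toFinset.card ≤ n - 2 ∧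
      (M₀ - A).toFinset.card ≤ n - 2 := by
  have hpow : 2 ^ (n-2) = 2 ^ (n-3) + 2 ^ (n-3) := by
    rw [show n - 2 = (n-3) + 1 from by omega, pow_succ]; ring
  by_cases htt : M₀.toFinset.card ≤ n - 2
  · obtain ⟨A, hA, hAc⟩ := exists_le_card M₀ (2 ^ (n-3)) (by omega)
    refine ⟨A, hA, hAc, ?_, ?_⟩
    · exact le_trans (Finset.card_le_card (fun z hz =>
        Multiset.mem_toFinset.mpr (Multiset.mem_of_le hA (Multiset.mem_toFinset.mp hz)))) htt
    · exact le_trans (Finset.card_le_card (fun z hz =>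
        Multiset.mem_toFinset.mpr (Multiset.mem_of_le (Multiset.sub_le_self M₀ A)
          (Multiset.mem_toFinset.mp hz)))) htt
  · -- t = n - 1 ≥ 5
    have htc : M₀.toFinset.card = n - 1 := by omega
    set Bad : Finset α := M₀.toFinset.filter (fun z => 2 ^ (n-3) < M₀.count z) with hBad
    have hBad1 : Bad.card ≤ 1 := by
      by_contra hb
      obtain ⟨x, hx, y, hy, hxy⟩ := Finset.one_lt_card.mp (show 1 < Bad.card by omega)
      rw [hBad, Finset.mem_filter] at hx hy
      have hle : Multiset.replicate (M₀.count x) x + Multiset.replicate (M₀.count y) y ≤ M₀ := by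
        rw [Multiset.le_iff_count]
        intro z
        rw [Multiset.count_add, Multiset.count_replicate, Multiset.count_replicate]
        split_ifs with h1 h2 h3
        · exact absurd (h1.trans h2.symm) hxy
        · subst h1; omega
        · subst h3; omega
        · omega
      have := Multiset.card_le_card hle
      rw [Multiset.card_add, Multiset.card_replicate, Multiset.card_replicate, hcard] at this
      omega
    have hGood : 2 ≤ (M₀.toFinset \ Bad).card := by
      have := Finset.le_card_sdiff Bad M₀.toFinset
      omega
    obtain ⟨x, hx, y, hy, hxy⟩ :=
      Finset.one_lt_card.mp (show 1 < (M₀.toFinset \ Bad).card by omega)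
    rw [Finset.mem_sdiff, hBad, Finset.mem_filter] at hx hy
    have hcx : M₀.count x ≤ 2 ^ (n-3) := by
      have h2 := hx.2; push_neg at h2; exact h2 hx.1
    have hcy : M₀.count y ≤ 2 ^ (n-3) := by
      have h2 := hy.2; push_neg at h2; exact h2 hy.1
    have hxM : x ∈ M₀.toFinset := hx.1
    have hyM : y ∈ M₀.toFinset := hy.1
    -- the pool
    set P : Multiset α := M₀.filter (fun z => z ≠ x ∧ z ≠ y) with hP
    have hPcard : 2 ^ (n-3) - M₀.count x ≤ Multiset.card P := by
      have e1 : P = (M₀.filter (· ≠ x)).filter (· ≠ y) := by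
        rw [hP, Multiset.filter_filter]
        apply Multiset.filter_congr
        intro z _
        constructor
        · rintro ⟨h1, h2⟩; exact ⟨h2, h1⟩
        · rintro ⟨h1, h2⟩; exact ⟨h2, h1⟩
      have e2 : Multiset.count y (M₀.filter (· ≠ x)) = M₀.count y := by
        rw [Multiset.count_filter, if_pos (Ne.symm hxy)]
      have e3 := card_filter_ne (M₀.filter (· ≠ x)) y
      have e4 := card_filter_ne M₀ x
      rw [e2, e4] at e3
      rw [e1, e3, hcard]
      omega
    obtain ⟨C, hCP, hCc⟩ := exists_le_card P (2 ^ (n-3) - M₀.count x) hPcard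
    have hCx : C.count x = 0 := by
      have := Multiset.le_iff_count.mp hCP x
      rw [hP, Multiset.count_filter, if_neg (by simp)] at this
      omega
    have hCy : C.count y = 0 := by
      have := Multiset.le_iff_count.mp hCP y
      rw [hP, Multiset.count_filter, if_neg (by simp)] at this
      omega
    refine ⟨Multiset.replicate (M₀.count x) x + C, ?_, ?_, ?_, ?_⟩
    · rw [Multiset.le_iff_count]
      intro z
      rw [Multiset.count_add, Multiset.count_replicate]
      have h1 := Multiset.le_iff_count.mp hCP z
      have h2 := Multiset.count_le_of_le z (Multiset.filter_le (fun z => z ≠ x ∧ z ≠ y) M₀)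
      rw [← hP] at h2
      split_ifs with hh
      · subst hh
        omega
      · omega
    · rw [Multiset.card_add, Multiset.card_replicate, hCc]; omega
    · -- avoids y
      apply le_trans (Finset.card_le_card (t := M₀.toFinset.erase y) ?_)
      · rw [Finset.card_erase_of_mem hyM]; omega
      · intro z hz
        rw [Multiset.mem_toFinset, Multiset.mem_add] at hz
        rw [Finset.mem_erase]
        constructor
        · rintro rfl
          rcases hz with hz | hz
          · have := Multiset.eq_of_mem_replicate hz
            exact hxy this.symm
          · rw [← Multiset.count_pos, hCy] at hz; omega
        · rw [Multiset.mem_toFinset]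
          rcases hz with hz | hz
          · have := Multiset.eq_of_mem_replicate hz
            subst this
            exact Multiset.mem_toFinset.mp hxM
          · exact Multiset.mem_of_le (le_trans hCP (Multiset.filter_le _ M₀)) hz
    · -- complement avoids x
      apply le_trans (Finset.card_le_card (t := M₀.toFinset.erase x) ?_)
      · rw [Finset.card_erase_of_mem hxM]; omega
      · intro z hz
        rw [Multiset.mem_toFinset] at hz
        rw [Finset.mem_erase]
        constructor
        · rintro rfl
          rw [← Multiset.count_pos, Multiset.count_sub, Multiset.count_add,
            Multiset.count_replicate, if_pos rfl, hCx] at hz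
          omega
        · rw [Multiset.mem_toFinset]
          exact Multiset.mem_of_le (Multiset.sub_le_self _ _) hz
theorem mainRealM (hconj : ∀ k, 2 ≤ k → k ≤ 5 → PairingConj k) :
    ∀ n : ℕ, 2 ≤ n → ∀ M₀ : Multiset (Fin n → ZMod 2),
      Multiset.card M₀ = 2 ^ (n - 2) → (0 : Fin n → ZMod 2) ∉ M₀ →
      M₀.toFinset.card ≤ n - 1 → RealM n (M₀ + M₀) := by
  intro n
  induction n using Nat.strong_induction_on with
  | _ n ih =>
    intro hn M₀ hcard h0 ht
    by_cases hn5 : n ≤ 5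
    · -- base case: use the conjecture
      have hMcard : Multiset.card (M₀ + M₀) = 2 ^ (n - 1) := by
        rw [Multiset.card_add, hcard, show n - 1 = (n-2)+1 from by omega, pow_succ]; ring
      obtain ⟨v, hv⟩ := exists_tuple (M₀ + M₀) (2 ^ (n-1)) hMcard
      have hnz : ∀ i, v i ≠ 0 := by
        intro i hvi
        have hmem : v i ∈ M₀ + M₀ := by
          rw [← hv]; exact Multiset.mem_map_of_mem _ (Finset.mem_univ_val _)
        rw [hvi, Multiset.mem_add] at hmem
        rcases hmem with h | h <;> exact h0 h
      have hsum : ∑ i, v i = 0 := by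
        show (Multiset.map v Finset.univ.val).sum = 0
        rw [hv, Multiset.sum_add]
        exact vadd_self M₀.sum
      obtain ⟨p, q, hpp, hiq⟩ := hconj n (by omega) hn5 v hnz hsum
      exact ⟨p, q, hpp, by rw [Multiset.map_congr rfl (fun i _ => hiq i), hv]⟩
    · -- inductive step
      have hn6 : 6 ≤ n := by omega
      obtain ⟨m, rfl⟩ : ∃ m, n = m + 2 := ⟨n - 2, by omega⟩
      have hm4 : 4 ≤ m := by omega
      obtain ⟨A, hAle, hAcard, hAt, hBt⟩ := split_lemma (m+2) hn6 M₀ hcard ht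
      set B := M₀ - A with hB
      have hABsum : A + B = M₀ := (add_comm A B).trans (tsub_add_cancel_of_le hAle)
      have hpowm : 2 ^ m = 2 ^ (m-1) + 2 ^ (m-1) := by
        have h := pow_succ 2 (m-1)
        rw [show m - 1 + 1 = m from by omega] at h
        omega
      have hBcard : Multiset.card B = 2 ^ (m-1) := by
        have hc := congrArg Multiset.card hABsum
        rw [Multiset.card_add, hAcard, hcard] at hc
        have h2 : (2:ℕ) ^ (m + 2 - 2) = 2 ^ m := rfl
        have h3 : (2:ℕ) ^ (m + 2 - 3) = 2 ^ (m-1) := rfl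
        rw [h2, h3, hpowm] at hc
        exact Nat.add_left_cancel hc
      -- span of the values and a hyperplane
      set S := Submodule.span (ZMod 2) ((M₀.toFinset : Set (Fin (m+2) → ZMod 2)))
      have hSx : ∃ x, x ∉ S := by
        have hfr : Module.finrank (ZMod 2) S ≤ m + 1 := by
          have h1 := finrank_span_finset_le_card (R := ZMod 2) M₀.toFinset
          have h2 : M₀.toFinset.card ≤ m + 1 := by
            have : m + 2 - 1 = m + 1 := rfl
            omega
          exact le_trans h1 h2
        by_contra h
        push_neg at h
        have hStop : S = ⊤ := Submodule.eq_top_iff'.mpr h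
        rw [hStop, finrank_top, Module.finrank_fin_fun] at hfr
        omega
      obtain ⟨x, hx⟩ := hSx
      obtain ⟨f, hfx, hfS⟩ := Submodule.exists_dual_map_eq_bot_of_notMem hx inferInstance
      have hfker : ∀ w ∈ S, f w = 0 := by
        intro w hw
        have h1 : f w ∈ Submodule.map f S := Submodule.mem_map_of_mem hw
        rw [hfS] at h1
        exact h1
      have hker : Module.finrank (ZMod 2) (LinearMap.ker f) = m + 1 := by
        have h1 := LinearMap.finrank_range_add_finrank_ker f
        have hr1 : Module.finrank (ZMod 2) (LinearMap.range f) = 1 := by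
          have hle : Module.finrank (ZMod 2) (LinearMap.range f) ≤ 1 := by
            have h2 := Submodule.finrank_le (LinearMap.range f)
            rwa [Module.finrank_self] at h2
          have hne : LinearMap.range f ≠ ⊥ := by
            intro hbot
            apply hfx
            have h3 : f x ∈ LinearMap.range f := ⟨x, rfl⟩
            rw [hbot] at h3
            exact h3
          have hpos : Module.finrank (ZMod 2) (LinearMap.range f) ≠ 0 := by
            intro h4
            exact hne (Submodule.finrank_eq_zero.mp h4)
          omega
        rw [hr1, Module.finrank_fin_fun] at h1
        omega
      let ψ : (Fin (m+1) → ZMod 2) ≃ₗ[ZMod 2] LinearMap.ker f :=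
        LinearEquiv.ofFinrankEq _ _ (by rw [Module.finrank_fin_fun, hker])
      let ι : (Fin (m+1) → ZMod 2) →ₗ[ZMod 2] (Fin (m+2) → ZMod 2) :=
        (LinearMap.ker f).subtype ∘ₗ ψ.toLinearMap
      have hιinj : Function.Injective ι := by
        intro a b hab
        exact ψ.injective (Subtype.ext hab)
      have hιrange : ∀ w : Fin (m+2) → ZMod 2, w ∈ LinearMap.ker f → ∃ u, ι u = w := by
        intro w hw
        refine ⟨ψ.symm ⟨w, hw⟩, ?_⟩
        simp [ι]
      have hxe : x ∉ LinearMap.range ι := by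
        rintro ⟨u, hu⟩
        apply hfx
        have h5 : ι u ∈ LinearMap.ker f := (ψ u).2
        rw [hu] at h5
        exact h5
      set g : (Fin (m+2) → ZMod 2) → (Fin (m+1) → ZMod 2) := Function.invFun ι with hgdef
      have hg : ∀ w ∈ M₀, ι (g w) = w := by
        intro w hw
        have hwS : w ∈ S := Submodule.subset_span (Multiset.mem_toFinset.mpr hw)
        have hwk : w ∈ LinearMap.ker f := LinearMap.mem_ker.mpr (hfker w hwS)
        exact Function.invFun_eq (hιrange w hwk)
      -- recursive instances
      have hrec : ∀ C : Multiset (Fin (m+2) → ZMod 2), C ≤ M₀ →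
          Multiset.card C = 2 ^ (m-1) → C.toFinset.card ≤ m → RealM (m+1) (C.map g + C.map g) := by
        intro C hCle hCcard hCt
        apply ih (m+1) (by omega) (by omega)
        · rw [Multiset.card_map]
          exact hCcard
        · intro hmem
          obtain ⟨w, hwC, hgw⟩ := Multiset.mem_map.mp hmem
          have hwM : w ∈ M₀ := Multiset.mem_of_le hCle hwC
          have := hg w hwM
          rw [hgw, _root_.map_zero] at this
          exact h0 (this ▸ hwM)
        · rw [Multiset.toFinset_map]
          exact le_trans (Finset.card_image_le) hCt
      have hArec := hrec A hAle hAcard hAt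
      have hBrec := hrec B (Multiset.sub_le_self M₀ A) hBcard hBt
      have hglue := glue m ι hιinj x hxe _ _ hArec hBrec
      have hmapA : (A.map g).map ι = A := by
        rw [Multiset.map_map]
        conv_rhs => rw [← Multiset.map_id A]
        exact Multiset.map_congr rfl (fun w hw => hg w (Multiset.mem_of_le hAle hw))
      have hmapB : (B.map g).map ι = B := by
        rw [Multiset.map_map]
        conv_rhs => rw [← Multiset.map_id B]
        exact Multiset.map_congr rfl
          (fun w hw => hg w (Multiset.mem_of_le (Multiset.sub_le_self M₀ A) hw))
      rw [Multiset.map_add, Multiset.map_add, hmapA, hmapB] at hglue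
      have hfinal : A + A + (B + B) = M₀ + M₀ := by
        rw [← hABsum, add_add_add_comm]
      rw [hfinal] at hglue
      exact hglue

end PairingAuxZZ

open PairingAuxZZ in
/-- Assuming the pairing conjecture holds in `F_2^2` through `F_2^5`, any `2^{n-1}` nonzero
vectors in `F_2^n` with `v_{2i-1} = v_{2i}` for all `i` and with at most `l < n` distinct
values are realized as the pair-sums of a partition of `F_2^n` into pairs. -/
theorem pairing_of_few_values (n l : ℕ) (hl : l < n)
    (hconj : ∀ k, 2 ≤ k → k ≤ 5 → PairingConj k)
    (v : Fin (2 ^ (n - 1)) → (Fin n → ZMod 2))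
    (hnz : ∀ i, v i ≠ 0)
    (hpair : ∀ (j : ℕ) (h : 2 * j + 1 < 2 ^ (n - 1)),
      v ⟨2 * j, lt_trans (Nat.lt_succ_self _) h⟩ = v ⟨2 * j + 1, h⟩)
    (hvals : (Finset.univ.image v).card ≤ l) :
    ∃ p q : Fin (2 ^ (n - 1)) → (Fin n → ZMod 2),
      PairPartition n p q ∧ ∀ i, p i + q i = v i := by
  classical
  have hl1 : 1 ≤ l := by
    have hne : (Finset.univ.image v).Nonempty :=
      Finset.Nonempty.image ⟨⟨0, by positivity⟩, Finset.mem_univ _⟩ v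
    have := Finset.card_pos.mpr hne
    omega
  have hn2 : 2 ≤ n := by omega
  obtain ⟨m, rfl⟩ : ∃ m, n = m + 2 := ⟨n - 2, by omega⟩
  have h2pow : ∀ j : Fin (2^m), 2 * (j : ℕ) + 1 < 2 ^ (m+1) := by
    intro j
    have hj := j.2
    have hp : (2:ℕ) ^ (m+1) = 2 ^ m * 2 := pow_succ 2 m
    omega
  let e₀ : Fin (2^m) ↪ Fin (2^(m+1)) :=
    ⟨fun j => ⟨2 * (j : ℕ), lt_trans (Nat.lt_succ_self _) (h2pow j)⟩, by
      intro a b hab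
      have := congrArg Fin.val hab
      simp only [] at this
      exact Fin.ext (by omega)⟩
  let e₁ : Fin (2^m) ↪ Fin (2^(m+1)) :=
    ⟨fun j => ⟨2 * (j : ℕ) + 1, h2pow j⟩, by
      intro a b hab
      have := congrArg Fin.val hab
      simp only [] at this
      exact Fin.ext (by omega)⟩
  have hdisj : Disjoint (Finset.univ.map e₀) (Finset.univ.map e₁) := by
    rw [Finset.disjoint_left]
    rintro a ha hb
    obtain ⟨j, -, rfl⟩ := Finset.mem_map.mp ha
    obtain ⟨k, -, hk⟩ := Finset.mem_map.mp hb
    have := congrArg Fin.val hk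
    simp only [e₀, e₁, Function.Embedding.coeFn_mk] at this
    change 2 * (k:ℕ) + 1 = 2 * (j:ℕ) at this
    omega
  have hunion : (Finset.univ.map e₀).disjUnion (Finset.univ.map e₁) hdisj = Finset.univ := by
    apply Finset.eq_univ_iff_forall.mpr
    intro a
    rw [Finset.mem_disjUnion]
    rcases Nat.even_or_odd (a : ℕ) with ⟨j, hj⟩ | ⟨j, hj⟩
    · left
      apply Finset.mem_map.mpr
      have hj2 : j < 2 ^ m := by
        have := a.2
        have hp : (2:ℕ) ^ (m+1) = 2 ^ m * 2 := pow_succ 2 m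
        omega
      exact ⟨⟨j, hj2⟩, Finset.mem_univ _, Fin.ext (by show 2 * j = (a:ℕ); omega)⟩
    · right
      apply Finset.mem_map.mpr
      have hj2 : j < 2 ^ m := by
        have := a.2
        have hp : (2:ℕ) ^ (m+1) = 2 ^ m * 2 := pow_succ 2 m
        omega
      exact ⟨⟨j, hj2⟩, Finset.mem_univ _, Fin.ext (by show 2 * j + 1 = (a:ℕ); omega)⟩
  have huval : (Finset.univ.val : Multiset (Fin (2^(m+1))))
      = Finset.univ.val.map e₀ + Finset.univ.val.map e₁ := by
    have hv := congrArg Finset.val hunion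
    rw [show ((Finset.univ.map e₀).disjUnion (Finset.univ.map e₁) hdisj).val
        = (Finset.univ.map e₀).val + (Finset.univ.map e₁).val from rfl,
      Finset.map_val, Finset.map_val] at hv
    exact hv.symm
  set M₀ : Multiset (Fin (m+2) → ZMod 2) := Finset.univ.val.map (v ∘ e₀) with hM₀
  have hcomp : v ∘ e₁ = v ∘ e₀ := by
    funext j
    exact (hpair (j : ℕ) (h2pow j)).symm
  have hMv : Finset.univ.val.map v = M₀ + M₀ := by
    calc Finset.univ.val.map v
        = (Finset.univ.val.map e₀ + Finset.univ.val.map e₁).map v := by rw [← huval]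
      _ = Finset.univ.val.map (v ∘ e₀) + Finset.univ.val.map (v ∘ e₁) := by
          rw [Multiset.map_add, Multiset.map_map, Multiset.map_map]
      _ = M₀ + M₀ := by rw [hcomp, hM₀]
  have hreal : RealM (m+2) (M₀ + M₀) := by
    apply mainRealM hconj (m+2) (by omega)
    · rw [hM₀, Multiset.card_map]
      simp
    · intro hmem
      obtain ⟨j, -, hj⟩ := Multiset.mem_map.mp hmem
      exact hnz (e₀ j) hj
    · have hsub : M₀.toFinset ⊆ Finset.univ.image v := by
        intro z hz
        rw [hM₀, Multiset.mem_toFinset] at hz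
        obtain ⟨j, -, hj⟩ := Multiset.mem_map.mp hz
        exact Finset.mem_image.mpr ⟨e₀ j, Finset.mem_univ _, hj⟩
      have := Finset.card_le_card hsub
      omega
  obtain ⟨p, q, hpp, hmap⟩ := hreal
  obtain ⟨σ, hσ⟩ := exists_perm_comp _ (fun i => p i + q i) v (hmap.trans hMv.symm)
  exact ⟨p ∘ σ, q ∘ σ, pairPartition_comp σ hpp, fun i => hσ i⟩
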